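/- Let H be a k-uniform hypergraph, let j ≤ k, and let t, m, e be parameters with e ≤ e(H). Then there exists a sub-hypergraph H' ⊆ H such that either (1) e(H') ≥ e(H) − e and every vertex set R of size t satisfies deg_{H'}(R) < m, or (2) H' has an (m,t)-bucket decomposition and e(H') ≥ e. -/

import Mathlib

/-- An `(m,t)`-bucket decomposition: a partition of the edge set into buckets of exactly
`m` edges, all edges of a bucket containing a common `t`-element vertex set. -/
def HasBucketDecomp {n : ℕ} (H' : Finset (Finset (Fin n))) (m t : ℕ) : Prop :=
  ∃ P : Finpartition H', ∀ B ∈ P.parts, B.card = m ∧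
    ∃ X : Finset (Fin n), X.card = t ∧ ∀ e ∈ B, X ⊆ e

/-- Cleaning lemma: for a `k`-uniform hypergraph `H`, `j ≤ k` and parameters `t, m, e` with
`e ≤ e(H)`, there is `H' ⊆ H` with either `e(H') ≥ e(H) − e` and every `t`-set of codegree
less than `m`, or `H'` has an `(m,t)`-bucket decomposition and `e(H') ≥ e`. -/
theorem stmt6 (n k j t m e : ℕ) (hm : 0 < m) (H : Finset (Finset (Fin n)))
    (hunif : ∀ E ∈ H, E.card = k) (hj : j ≤ k) (he : e ≤ H.card) :
    ∃ H' ⊆ H,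
      (H'.card ≥ H.card - e ∧
        ∀ R : Finset (Fin n), R.card = t → (H'.filter (fun E => R ⊆ E)).card < m) ∨
      (HasBucketDecomp H' m t ∧ H'.card ≥ e) := by
  clear hj
  induction e using Nat.strong_induction_on generalizing H with
  | _ e IH =>
  by_cases hdeg : ∀ R : Finset (Fin n), R.card = t → (H.filter (fun E => R ⊆ E)).card < m
  · exact ⟨H, Finset.Subset.refl _, Or.inl ⟨Nat.sub_le _ _, hdeg⟩⟩
  push_neg at hdeg
  obtain ⟨R, hR, hRm⟩ := hdeg
  obtain ⟨B, hBsub, hBcard⟩ := Finset.exists_subset_card_eq hRm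
  have hBH : B ⊆ H := hBsub.trans (Finset.filter_subset _ _)
  have hBne : B ≠ (⊥ : Finset (Finset (Fin n))) := by
    intro h
    rw [h] at hBcard
    simp at hBcard
    omega
  have hBR : ∀ E ∈ B, R ⊆ E := fun E hE => (Finset.mem_filter.1 (hBsub hE)).2
  by_cases hem : e ≤ m
  · refine ⟨B, hBH, Or.inr ⟨⟨Finpartition.indiscrete hBne, ?_⟩, by omega⟩⟩
    intro B' hB'
    rw [Finpartition.indiscrete_parts, Finset.mem_singleton] at hB'
    subst hB'
    exact ⟨hBcard, R, hR, hBR⟩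
  · push_neg at hem
    have hcard : H.card - m = (H \ B).card := by
      rw [Finset.card_sdiff_of_subset hBH, hBcard]
    obtain ⟨H'', hH''sub, hcase⟩ := IH (e - m) (by omega) (H \ B)
      (fun E hE => hunif E (Finset.mem_sdiff.1 hE).1) (by omega)
    rcases hcase with ⟨h1, h2⟩ | ⟨⟨P, hP⟩, h2⟩
    · refine ⟨H'', hH''sub.trans (Finset.sdiff_subset), Or.inl ⟨by omega, h2⟩⟩
    · have hdisj : Disjoint H'' B :=
        (Finset.sdiff_disjoint.mono_left hH''sub)
      refine ⟨H'' ∪ B, Finset.union_subset (hH''sub.trans Finset.sdiff_subset) hBH,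
        Or.inr ⟨⟨P.extend hBne hdisj (by rw [Finset.sup_eq_union]), ?_⟩, ?_⟩⟩
      · intro B' hB'
        rw [Finpartition.extend_parts, Finset.mem_insert] at hB'
        rcases hB' with rfl | hB'
        · exact ⟨hBcard, R, hR, hBR⟩
        · exact hP B' hB'
      · rw [Finset.card_union_of_disjoint hdisj]
        omega
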